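/- arXiv:2307.00442 — 5 statements merged into one kernel-verified Lean document; each statement's English description precedes it below -/
import Mathlib

section
/- Let C be a category with an initial object ⊥ and let F : C ⥤ C be an endofunctor. Define X : ℕ → C by X 0 = ⊥ and X (n+1) = F.obj (X n), and morphisms f n : X n ⟶ X (n+1) by taking f 0 to be the unique morphism out of ⊥ and f (n+1) = F.map (f n); let D : ℕ ⥤ C be the chain determined by this data (e.g. via Functor.ofSequence). Suppose D admits a colimit cocone with point I and coprojections ι n : X n ⟶ I, and let k : I ⟶ F.obj I be the unique morphism satisfying ι n ≫ k = f n ≫ F.map (ι n) for all n (induced by the universal property of the colimit). If k is an isomorphism, then the F-algebra (I, inv k) is an initial object of the category of F-algebras. -/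
open CategoryTheory CategoryTheory.Limits

universe v u

namespace Adamek0

variable {C : Type u} [Category.{v} C] [HasInitial C] (F : C ⥤ C)

/-- The objects of the initial chain: `X 0 = ⊥`, `X (n+1) = F (X n)`. -/
noncomputable def X : ℕ → C
  | 0 => ⊥_ C
  | n + 1 => F.obj (X n)

/-- The connecting morphisms of the initial chain. -/
noncomputable def f : ∀ n : ℕ, X F n ⟶ X F (n + 1)
  | 0 => initial.to _
  | n + 1 => F.map (f n)

/-- The initial chain `⊥ ⟶ F ⊥ ⟶ F² ⊥ ⟶ ⋯` as a functor `ℕ ⥤ C`. -/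
noncomputable def D : ℕ ⥤ C := Functor.ofSequence (f F)

/-- The canonical cocone morphisms to any algebra. -/
noncomputable def g (A : Endofunctor.Algebra F) : ∀ n : ℕ, X F n ⟶ A.a
  | 0 => initial.to _
  | n + 1 => F.map (g A n) ≫ A.str

lemma g_succ (A : Endofunctor.Algebra F) (n : ℕ) :
    f F n ≫ g F A (n + 1) = g F A n := by
  induction n with
  | zero =>
      apply Limits.initial.hom_ext
  | succ n ih =>
      show F.map (f F n) ≫ F.map (g F A (n + 1)) ≫ A.str = F.map (g F A n) ≫ A.str
      rw [← Category.assoc, ← F.map_comp, ih]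

/-- The cocone on the initial chain with point an arbitrary algebra. -/
noncomputable def gCocone (A : Endofunctor.Algebra F) : Cocone (D F) where
  pt := A.a
  ι := NatTrans.ofSequence (fun n => g F A n) (by
    intro n
    simp [D, Functor.ofSequence_map_homOfLE_succ, g_succ]
    exact (g_succ F A n).trans (Category.comp_id _).symm)

@[simp]
lemma gCocone_ι_app (A : Endofunctor.Algebra F) (n : ℕ) :
    (gCocone F A).ι.app n = g F A n := rfl

lemma D_map_succ (n : ℕ) :
    (D F).map (homOfLE (Nat.le_add_right n 1)) = f F n :=
  Functor.ofSequence_map_homOfLE_succ _ n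

end Adamek0

/-- Ad\'amek's initial algebra construction: if the initial chain
`⊥ ⟶ F ⊥ ⟶ F² ⊥ ⟶ ⋯` has a colimit `I` and the canonically induced map
`k : I ⟶ F I` is an isomorphism, then `(I, inv k)` is an initial `F`-algebra. -/
theorem adamek_initial_algebra {C : Type u} [Category.{v} C] [HasInitial C] (F : C ⥤ C)
    (c : Cocone (Adamek0.D F)) (hc : IsColimit c)
    (k : c.pt ⟶ F.obj c.pt)
    (hk : ∀ n : ℕ, c.ι.app n ≫ k = Adamek0.f F n ≫ F.map (c.ι.app n))
    (hiso : IsIso k) :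
    Nonempty (IsInitial (⟨c.pt, inv k⟩ : Endofunctor.Algebra F)) := by
  open Adamek0 in
  -- key identity: ι (n+1) ≫ k = F.map (ι n)
  have hι : ∀ n : ℕ, c.ι.app (n + 1) ≫ k = F.map (c.ι.app n) := by
    intro n
    have hw : Adamek0.f F n ≫ c.ι.app (n + 1) = c.ι.app n := by
      have := c.w (homOfLE (Nat.le_add_right n 1))
      rwa [Adamek0.D_map_succ] at this
    exact (hk (n + 1)).trans ((F.map_comp (Adamek0.f F n) (c.ι.app (n + 1))).symm.trans
      (congrArg (fun t => F.map t) hw))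
  refine ⟨IsInitial.ofUniqueHom (fun A => ?_) (fun A m => ?_)⟩
  · refine ⟨hc.desc (Adamek0.gCocone F A), ?_⟩
    -- algebra morphism condition: F.map u ≫ A.str = inv k ≫ u
    have : k ≫ F.map (hc.desc (Adamek0.gCocone F A)) ≫ A.str = hc.desc (Adamek0.gCocone F A) := by
      apply hc.hom_ext
      intro n
      erw [hc.fac]
      erw [← Category.assoc, hk n, Category.assoc, ← Category.assoc (F.map _),
        ← F.map_comp, hc.fac]
      exact Adamek0.g_succ F A n
    show F.map (hc.desc (Adamek0.gCocone F A)) ≫ A.str = inv k ≫ hc.desc (Adamek0.gCocone F A)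
    conv_rhs => rw [← this]
    erw [← Category.assoc, IsIso.inv_hom_id, Category.id_comp]
  · -- uniqueness
    have hm : ∀ n : ℕ, c.ι.app n ≫ m.f = Adamek0.g F A n := by
      intro n
      induction n with
      | zero => apply Limits.initial.hom_ext
      | succ n ih =>
          have hmf : m.f = k ≫ F.map m.f ≫ A.str := by
            have h1 : F.map m.f ≫ A.str = inv k ≫ m.f := m.h
            rw [h1, ← Category.assoc, IsIso.hom_inv_id, Category.id_comp]
          erw [hmf, ← Category.assoc, hι n, ← Category.assoc, ← F.map_comp, ih]
          rfl
    apply Endofunctor.Algebra.Hom.ext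
    apply hc.hom_ext
    intro n
    rw [hm n]
    exact (hc.fac (Adamek0.gCocone F A) n).symm
end

section
/- Let C be a category that has an initial object and colimits of shape ℕ (colimits of ω-chains), and let F : C ⥤ C be an endofunctor that preserves colimits of shape ℕ. Then the category of F-algebras, Endofunctor.Algebra F, has an initial object, and the structure map of this initial algebra is an isomorphism. -/
open CategoryTheory CategoryTheory.Limits

universe v u

namespace AdamekAux

variable {C : Type u} [Category.{v} C] [HasInitial C] [HasColimitsOfShape ℕ C]
  (F : C ⥤ C)

/-- Objects of the initial chain: `⊥, F ⊥, F² ⊥, ...` -/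
noncomputable def chainObj : ℕ → C
  | 0 => ⊥_ C
  | n + 1 => F.obj (chainObj n)

/-- Connecting maps of the initial chain. -/
noncomputable def chainMap : ∀ n, chainObj F n ⟶ chainObj F (n + 1)
  | 0 => initial.to _
  | n + 1 => F.map (chainMap n)

/-- The initial chain as a functor `ℕ ⥤ C`. -/
noncomputable def chain : ℕ ⥤ C := Functor.ofSequence (chainMap F)

@[simp] lemma chain_obj (n : ℕ) : (chain F).obj n = chainObj F n := rfl

@[simp] lemma chain_map_succ (n : ℕ) :
    (chain F).map (homOfLE (Nat.le_add_right n 1)) = chainMap F n :=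
  Functor.ofSequence_map_homOfLE_succ _ n

/-- The colimit of the initial chain. -/
noncomputable def A : C := colimit (chain F)

/-- The colimit cocone legs. -/
noncomputable def ι (n : ℕ) : chainObj F n ⟶ A F := colimit.ι (chain F) n

@[simp] lemma w (n : ℕ) : chainMap F n ≫ ι F (n + 1) = ι F n := by
  rw [← chain_map_succ]
  exact colimit.w (chain F) (homOfLE (Nat.le_add_right n 1))

variable [PreservesColimitsOfShape ℕ F]

/-- `F` applied to the colimit cocone is a colimit of `chain F ⋙ F`. -/
noncomputable def mapIsColimit : IsColimit (F.mapCocone (colimit.cocone (chain F))) :=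
  isColimitOfPreserves F (colimit.isColimit _)

/-- Cocone on `chain F ⋙ F` with apex `A F` given by shifted legs. -/
noncomputable def shiftCocone : Cocone (chain F ⋙ F) where
  pt := A F
  ι := NatTrans.ofSequence (fun n => ι F (n + 1)) (by
    intro n
    simp only [Functor.comp_obj, Functor.comp_map, chain_map_succ, Functor.const_obj_obj,
      Functor.const_obj_map, Category.comp_id]
    have : F.map (chainMap F n) = chainMap F (n + 1) := rfl
    exact (w F (n + 1)).trans (Category.comp_id _).symm)

/-- The structure map of the candidate initial algebra. -/
noncomputable def str : F.obj (A F) ⟶ A F := (mapIsColimit F).desc (shiftCocone F)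

@[simp] lemma str_fac (n : ℕ) : F.map (ι F n) ≫ str F = ι F (n + 1) :=
  (mapIsColimit F).fac (shiftCocone F) n

/-- Cocone on `chain F` with apex `F.obj (A F)`. -/
noncomputable def invCocone : Cocone (chain F) where
  pt := F.obj (A F)
  ι := NatTrans.ofSequence (fun n => chainMap F n ≫ F.map (ι F n)) (by
    intro n
    simp only [chain_map_succ, Functor.const_obj_obj, Functor.const_obj_map, Category.comp_id]
    have h : chainMap F (n + 1) = F.map (chainMap F n) := rfl
    exact congrArg (chainMap F n ≫ ·) ((F.map_comp _ _).symm.trans (congrArg F.map (w F n))))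

/-- The inverse of the structure map. -/
noncomputable def strInv : A F ⟶ F.obj (A F) := colimit.desc (chain F) (invCocone F)

@[simp] lemma strInv_fac (n : ℕ) : ι F n ≫ strInv F = chainMap F n ≫ F.map (ι F n) :=
  colimit.ι_desc (invCocone F) n

lemma str_strInv : str F ≫ strInv F = 𝟙 _ := by
  apply (mapIsColimit F).hom_ext
  intro n
  have : (F.mapCocone (colimit.cocone (chain F))).ι.app n = F.map (ι F n) := rfl
  rw [this]
  erw [Category.comp_id, ← Category.assoc, str_fac]
  erw [strInv_fac]
  have h : chainMap F (n + 1) = F.map (chainMap F n) := rfl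
  erw [h, ← F.map_comp, w]

lemma strInv_str : strInv F ≫ str F = 𝟙 _ := by
  apply colimit.hom_ext
  intro n
  have : colimit.ι (chain F) n = ι F n := rfl
  rw [this]
  erw [Category.comp_id, ← Category.assoc, strInv_fac]
  erw [Category.assoc, str_fac, w]

instance : IsIso (str F) :=
  ⟨strInv F, str_strInv F, strInv_str F⟩

/-- The candidate initial algebra. -/
noncomputable def alg : Endofunctor.Algebra F := ⟨A F, str F⟩

variable (B : Endofunctor.Algebra F)

/-- Legs of the cocone into an arbitrary algebra `B`. -/
noncomputable def toAlg : ∀ n, chainObj F n ⟶ B.a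
  | 0 => initial.to _
  | n + 1 => F.map (toAlg n) ≫ B.str

lemma toAlg_w : ∀ n, chainMap F n ≫ toAlg F B (n + 1) = toAlg F B n
  | 0 => initial.hom_ext _ _
  | n + 1 => by
      show F.map (chainMap F n) ≫ F.map (toAlg F B (n + 1)) ≫ B.str = _
      rw [← Category.assoc, ← F.map_comp, toAlg_w n]
      rfl

/-- Cocone on `chain F` with apex `B.a`. -/
noncomputable def algCocone : Cocone (chain F) where
  pt := B.a
  ι := NatTrans.ofSequence (toAlg F B) (by
    intro n
    simp only [chain_map_succ, Functor.const_obj_obj, Functor.const_obj_map, Category.comp_id]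
    exact (toAlg_w F B n).trans (Category.comp_id _).symm)

/-- The underlying map of the unique algebra morphism. -/
noncomputable def algHomF : A F ⟶ B.a := colimit.desc (chain F) (algCocone F B)

@[simp] lemma algHomF_fac (n : ℕ) : ι F n ≫ algHomF F B = toAlg F B n :=
  colimit.ι_desc (algCocone F B) n

lemma algHom_comm : F.map (algHomF F B) ≫ B.str = str F ≫ algHomF F B := by
  apply (mapIsColimit F).hom_ext
  intro n
  have : (F.mapCocone (colimit.cocone (chain F))).ι.app n = F.map (ι F n) := rfl
  rw [this]
  erw [← Category.assoc, ← F.map_comp, algHomF_fac, ← Category.assoc, str_fac, algHomF_fac]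
  rfl

/-- The unique algebra morphism from `alg F` to `B`. -/
noncomputable def algHom : alg F ⟶ B := ⟨algHomF F B, algHom_comm F B⟩

lemma algHom_uniq (g : alg F ⟶ B) : g = algHom F B := by
  apply Endofunctor.Algebra.Hom.ext
  apply colimit.hom_ext
  intro n
  show ι F n ≫ g.f = ι F n ≫ algHomF F B
  rw [algHomF_fac]
  induction n with
  | zero => exact initial.hom_ext _ _
  | succ n ih =>
      have h2 : ι F (n + 1) = F.map (ι F n) ≫ str F := (str_fac F n).symm
      erw [h2, Category.assoc]
      have h3 : str F ≫ g.f = F.map g.f ≫ B.str := g.h.symm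
      erw [h3, ← Category.assoc, ← F.map_comp, ih]
      rfl

/-- `alg F` is an initial algebra. -/
noncomputable def algIsInitial : IsInitial (alg F) :=
  IsInitial.ofUniqueHom (algHom F) (fun B g => algHom_uniq F B g)

end AdamekAux

/-- If `C` has an initial object and colimits of ω-chains, and `F : C ⥤ C` preserves
colimits of ω-chains, then the category of `F`-algebras has an initial object, whose
structure map is an isomorphism. -/
theorem adamek_hasInitial_algebra {C : Type u} [Category.{v} C] [HasInitial C]
    [HasColimitsOfShape ℕ C] (F : C ⥤ C) [PreservesColimitsOfShape ℕ F] :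
    ∃ A : Endofunctor.Algebra F, Nonempty (IsInitial A) ∧ IsIso A.str := by
  exact ⟨AdamekAux.alg F, ⟨AdamekAux.algIsInitial F⟩,
    inferInstanceAs (IsIso (AdamekAux.str F))⟩
end

section
/- Let C be a category, F : C ⥤ C an endofunctor, and suppose there exists a limit ordinal λ such that (C, F) is compatible with λ-sequences. Let ι : Fix(F) ⥤ Endofunctor.Coalgebra F be the inclusion and let I be a left adjoint to ι (with a chosen adjunction). For any F-coalgebra (V, ν), the coaction ν defines an F-coalgebra homomorphism (V, ν) ⟶ (F.obj V, F.map ν), and this homomorphism is F-local: its image under I is an isomorphism. -/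
open CategoryTheory CategoryTheory.Limits

universe w v u

/-- The pair `(C, F)` is compatible with `λ`-sequences: `λ` is a limit ordinal, `C` has
colimits of shape `Set.Iio θ` for every limit ordinal `0 < θ ≤ λ`, and `F` preserves
colimits of shape `Set.Iio λ`. -/
def CompatibleWithSequences {C : Type u} [Category.{v} C] (F : C ⥤ C)
    (lam : Ordinal.{w}) : Prop :=
  Order.IsSuccLimit lam ∧
    (∀ θ : Ordinal.{w}, Order.IsSuccLimit θ → 0 < θ → θ ≤ lam → HasColimitsOfShape (Set.Iio θ) C) ∧
    PreservesColimitsOfShape (Set.Iio lam) F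

/-- For any `F`-coalgebra `(V, ν)`, the coaction `ν` defines a coalgebra homomorphism
`(V, ν) ⟶ (F V, F ν)`, and this homomorphism is `F`-local: its image under the left
adjoint `I` to the inclusion of `Fix(F)` is an isomorphism. -/
theorem coaction_is_local {C : Type u} [Category.{v} C] (F : C ⥤ C)
    (h : ∃ lam : Ordinal.{w}, CompatibleWithSequences F lam)
    (I : Endofunctor.Coalgebra F ⥤
      ObjectProperty.FullSubcategory (fun V : Endofunctor.Coalgebra F => IsIso V.str))
    (adj : I ⊣ ObjectProperty.ι
      (fun V : Endofunctor.Coalgebra F => IsIso V.str))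
    (V : Endofunctor.Coalgebra F) :
    IsIso (I.map
      ({ f := V.str, h := rfl } :
        V ⟶ (⟨F.obj V.V, F.map V.str⟩ : Endofunctor.Coalgebra F))) := by
  classical
  set X : Endofunctor.Coalgebra F := ⟨F.obj V.V, F.map V.str⟩ with hX
  set f : V ⟶ X := { f := V.str, h := rfl } with hf
  haveI hV : IsIso (I.obj V).obj.str := (I.obj V).property
  haveI hXx : IsIso (I.obj X).obj.str := (I.obj X).property
  -- cancellation lemma: maps out of X into a fixed coalgebra are determined by
  -- their precomposition with f
  have cancel : ∀ (W : Endofunctor.Coalgebra F), IsIso W.str →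
      ∀ (h₁ h₂ : X ⟶ W), f ≫ h₁ = f ≫ h₂ → h₁ = h₂ := by
    intro W hW h₁ h₂ e
    haveI := hW
    have e' : V.str ≫ h₁.f = V.str ≫ h₂.f := by
      have := congrArg Endofunctor.Coalgebra.Hom.f e
      simpa [hf] using this
    have r : ∀ hh : X ⟶ W, hh.f = F.map (V.str ≫ hh.f) ≫ inv W.str := by
      intro hh
      have hh' : F.map V.str ≫ F.map hh.f = hh.f ≫ W.str := hh.h
      rw [F.map_comp, hh', Category.assoc, IsIso.hom_inv_id, Category.comp_id]
    ext
    rw [r h₁, r h₂, e']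
  -- the unit at V
  let η : V ⟶ (ObjectProperty.ι
      (fun V : Endofunctor.Coalgebra F => IsIso V.str)).obj (I.obj V) := adj.unit.app V
  have hη : η = adj.unit.app V := rfl
  have hηc : V.str ≫ F.map η.f = η.f ≫ (I.obj V).obj.str := η.h
  have key : V.str ≫ (F.map η.f ≫ inv (I.obj V).obj.str) = η.f := by
    rw [← Category.assoc, hηc, Category.assoc, IsIso.hom_inv_id, Category.comp_id]
  -- candidate retraction
  let k : X ⟶ (ObjectProperty.ι
      (fun V : Endofunctor.Coalgebra F => IsIso V.str)).obj (I.obj V) :=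
    { f := F.map η.f ≫ inv (I.obj V).obj.str
      h := by
        show F.map V.str ≫ F.map (F.map η.f ≫ inv (I.obj V).obj.str) =
          (F.map η.f ≫ inv (I.obj V).obj.str) ≫ (I.obj V).obj.str
        rw [← F.map_comp, key, Category.assoc, IsIso.inv_hom_id, Category.comp_id]
      }
  have hkf : k.f = F.map η.f ≫ inv (I.obj V).obj.str := rfl
  have hfk : f ≫ k = η := by
    ext
    show V.str ≫ k.f = η.f
    rw [hkf, key]
  let k' : I.obj X ⟶ I.obj V := (adj.homEquiv X (I.obj V)).symm k
  have hk' : k' = (adj.homEquiv X (I.obj V)).symm k := rfl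
  have h1 : I.map f ≫ k' = 𝟙 (I.obj V) := by
    apply (adj.homEquiv V (I.obj V)).injective
    rw [adj.homEquiv_naturality_left, hk', Equiv.apply_symm_apply, hfk, hη,
      adj.homEquiv_unit, CategoryTheory.Functor.map_id]
    exact (Category.comp_id _).symm
  have h2 : k' ≫ I.map f = 𝟙 (I.obj X) := by
    apply (adj.homEquiv X (I.obj X)).injective
    rw [adj.homEquiv_naturality_right, hk', Equiv.apply_symm_apply, adj.homEquiv_unit,
      CategoryTheory.Functor.map_id]
    refine Eq.trans ?_ (Category.comp_id (adj.unit.app X)).symm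
    apply cancel _ hXx
    rw [← Category.assoc, hfk]
    have := adj.unit.naturality f
    simpa [hη] using this.symm
  exact ⟨k', h1, h2⟩
end

section
/- Let C be a category, F : C ⥤ C an endofunctor, and suppose there exists a limit ordinal λ such that (C, F) is compatible with λ-sequences; let I be a left adjoint to the inclusion Fix(F) ⥤ Endofunctor.Coalgebra F. Let φ : (V, ν) ⟶ (W, μ) be an F-coalgebra homomorphism with underlying morphism φ.f : V ⟶ W in C. If there exists a morphism s : W ⟶ F.obj V in C such that φ.f ≫ s = ν and s ≫ F.map φ.f = μ, then φ is F-local: I.map φ is an isomorphism. -/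
open CategoryTheory CategoryTheory.Limits

universe w v u

/-- A sufficient criterion for `F`-locality: if a coalgebra homomorphism
`φ : (V, ν) ⟶ (W, μ)` admits `s : W ⟶ F V` in `C` with `φ.f ≫ s = ν` and
`s ≫ F.map φ.f = μ`, then `I.map φ` is an isomorphism. -/
theorem local_of_lift {C : Type u} [Category.{v} C] (F : C ⥤ C)
    (h : ∃ lam : Ordinal.{w}, CompatibleWithSequences F lam)
    (I : Endofunctor.Coalgebra F ⥤
      ObjectProperty.FullSubcategory (fun V : Endofunctor.Coalgebra F => IsIso V.str))
    (adj : I ⊣ ObjectProperty.ι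
      (fun V : Endofunctor.Coalgebra F => IsIso V.str))
    {V W : Endofunctor.Coalgebra F} (φ : V ⟶ W)
    (s : W.V ⟶ F.obj V.V) (hs1 : φ.f ≫ s = V.str) (hs2 : s ≫ F.map φ.f = W.str) :
    IsIso (I.map φ) := by
  rw [isIso_iff_coyoneda_map_bijective]
  intro T
  haveI : IsIso T.obj.str := T.property
  -- the key: precomposition with φ on coalgebra homs into T.obj is bijective
  have key : Function.Bijective
      (fun g : W ⟶ (ObjectProperty.ι
        (fun V : Endofunctor.Coalgebra F => IsIso V.str)).obj T => φ ≫ g) := by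
    have huniq : ∀ g : W ⟶ (ObjectProperty.ι
        (fun V : Endofunctor.Coalgebra F => IsIso V.str)).obj T,
        g.f = s ≫ F.map (φ.f ≫ g.f) ≫ inv T.obj.str := by
      intro g
      have hg : W.str ≫ F.map g.f = g.f ≫ T.obj.str := g.h
      have hkey : g.f ≫ T.obj.str = s ≫ F.map (φ.f ≫ g.f) := by
        rw [F.map_comp, ← Category.assoc, hs2, hg]
      rw [← Category.assoc, ← hkey, Category.assoc, IsIso.hom_inv_id,
        Category.comp_id]
    constructor
    · intro g₁ g₂ hg
      ext
      rw [huniq g₁, huniq g₂]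
      have : φ.f ≫ g₁.f = φ.f ≫ g₂.f := congrArg Endofunctor.Coalgebra.Hom.f hg
      rw [this]
    · intro g
      have hgh : V.str ≫ F.map g.f = g.f ≫ T.obj.str := g.h
      have hcomp : φ.f ≫ s ≫ F.map g.f ≫ inv T.obj.str = g.f := by
        rw [← Category.assoc, hs1, ← Category.assoc, hgh, Category.assoc,
          IsIso.hom_inv_id, Category.comp_id]
      refine ⟨⟨s ≫ F.map g.f ≫ inv T.obj.str, ?_⟩, ?_⟩
      · show W.str ≫ F.map (s ≫ F.map g.f ≫ inv T.obj.str) = _ ≫ T.obj.str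
        rw [← hs2, Category.assoc, ← F.map_comp, hcomp]
        simp
      · apply Endofunctor.Coalgebra.Hom.ext
        exact hcomp
  -- transfer along the adjunction
  have hconj : ∀ g : I.obj W ⟶ T,
      adj.homEquiv V T (I.map φ ≫ g) = φ ≫ adj.homEquiv W T g := by
    intro g
    exact adj.homEquiv_naturality_left φ g
  have : (fun g : I.obj W ⟶ T => I.map φ ≫ g) =
      (adj.homEquiv V T).symm ∘
        (fun g => φ ≫ g) ∘ (adj.homEquiv W T) := by
    funext g
    apply (adj.homEquiv V T).injective
    rw [hconj g]
    simp only [Function.comp_apply, Equiv.apply_symm_apply]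
  rw [this]
  exact ((adj.homEquiv V T).symm.bijective.comp key).comp (adj.homEquiv W T).bijective
end

section
/- Let C be a category, F : C ⥤ C an endofunctor, and suppose there exists a limit ordinal λ such that C has limits of shape (Set.Iio θ)ᵒᵖ for every limit ordinal 0 < θ ≤ λ and F preserves limits of shape (Set.Iio λ)ᵒᵖ; let T be a right adjoint to the inclusion of the full subcategory of Endofunctor.Algebra F spanned by the algebras with invertible action. Let φ : (A, α) ⟶ (B, β) be an F-algebra homomorphism with underlying morphism φ.f : A ⟶ B in C. If there exists a morphism s : F.obj B ⟶ A in C such that F.map φ.f ≫ s = α and s ≫ φ.f = β, then T.map φ is an isomorphism. -/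
open CategoryTheory CategoryTheory.Limits

universe w v u

/-- The pair `(C, F)` is compatible with inverse `λ`-sequences: `λ` is a limit ordinal,
`C` has limits of shape `(Set.Iio θ)ᵒᵖ` for every limit ordinal `0 < θ ≤ λ`, and `F`
preserves limits of shape `(Set.Iio λ)ᵒᵖ`. -/
def CompatibleWithInverseSequences {C : Type u} [Category.{v} C] (F : C ⥤ C)
    (lam : Ordinal.{w}) : Prop :=
  Order.IsSuccLimit lam ∧
    (∀ θ : Ordinal.{w}, Order.IsSuccLimit θ → 0 < θ → θ ≤ lam →
      HasLimitsOfShape (Set.Iio θ)ᵒᵖ C) ∧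
    PreservesLimitsOfShape (Set.Iio lam)ᵒᵖ F

section Aux

variable {C : Type u} [Category.{v} C] {F : C ⥤ C}
  {A B : Endofunctor.Algebra F} (φ : A ⟶ B) (s : F.obj B.a ⟶ A.a)

/-- The lift through `φ` of an algebra hom `ψ : X ⟶ B` when `X.str` is invertible. -/
noncomputable def liftHom (hs1 : F.map φ.f ≫ s = A.str) (hs2 : s ≫ φ.f = B.str)
    {X : Endofunctor.Algebra F} (hX : IsIso X.str) (ψ : X ⟶ B) : X ⟶ A where
  f := inv X.str ≫ F.map ψ.f ≫ s
  h := by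
    have e : (inv X.str ≫ F.map ψ.f ≫ s) ≫ φ.f = ψ.f := by
      simp only [Category.assoc, hs2]
      rw [ψ.h, IsIso.inv_hom_id_assoc]
    rw [← hs1, ← Category.assoc, ← F.map_comp, e, IsIso.hom_inv_id_assoc]

theorem liftHom_comp (hs1 : F.map φ.f ≫ s = A.str) (hs2 : s ≫ φ.f = B.str)
    {X : Endofunctor.Algebra F} (hX : IsIso X.str) (ψ : X ⟶ B) :
    liftHom φ s hs1 hs2 hX ψ ≫ φ = ψ := by
  ext
  have hψ : F.map ψ.f ≫ B.str = X.str ≫ ψ.f := ψ.h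
  show (inv X.str ≫ F.map ψ.f ≫ s) ≫ φ.f = ψ.f
  rw [Category.assoc, Category.assoc, hs2, hψ, IsIso.inv_hom_id_assoc]

theorem lift_unique (hs1 : F.map φ.f ≫ s = A.str)
    {X : Endofunctor.Algebra F} (hX : IsIso X.str) (g₁ g₂ : X ⟶ A)
    (hg : g₁ ≫ φ = g₂ ≫ φ) : g₁ = g₂ := by
  have key : ∀ g : X ⟶ A, g.f = inv X.str ≫ F.map (g ≫ φ).f ≫ s := by
    intro g
    have h1 : X.str ≫ g.f = F.map (g ≫ φ).f ≫ s := by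
      show X.str ≫ g.f = F.map (g.f ≫ φ.f) ≫ s
      rw [F.map_comp, Category.assoc, hs1, g.h]
    rw [← h1, IsIso.inv_hom_id_assoc]
  ext
  rw [key g₁, key g₂, hg]

end Aux

/-- A sufficient criterion for `F`-colocality: if an algebra homomorphism
`φ : (A, α) ⟶ (B, β)` admits `s : F B ⟶ A` in `C` with `F.map φ.f ≫ s = α` and
`s ≫ φ.f = β`, then `T.map φ` is an isomorphism, where `T` is a right adjoint to the
inclusion of the algebras with invertible action. -/
theorem colocal_of_lift {C : Type u} [Category.{v} C] (F : C ⥤ C)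
    (h : ∃ lam : Ordinal.{w}, CompatibleWithInverseSequences F lam)
    (T : Endofunctor.Algebra F ⥤
      ObjectProperty.FullSubcategory (fun A : Endofunctor.Algebra F => IsIso A.str))
    (adj : ObjectProperty.ι
      (fun A : Endofunctor.Algebra F => IsIso A.str) ⊣ T)
    {A B : Endofunctor.Algebra F} (φ : A ⟶ B)
    (s : F.obj B.a ⟶ A.a) (hs1 : F.map φ.f ≫ s = A.str) (hs2 : s ≫ φ.f = B.str) :
    IsIso (T.map φ) := by
  set ι := ObjectProperty.ι (fun A : Endofunctor.Algebra F => IsIso A.str)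
    with hι
  have hXB : IsIso (T.obj B).obj.str := (T.obj B).property
  set ℓ : ι.obj (T.obj B) ⟶ A := liftHom φ s hs1 hs2 hXB (adj.counit.app B) with hℓ
  refine ⟨adj.homEquiv (T.obj B) A ℓ, ?_, ?_⟩
  · -- T.map φ ≫ i = 𝟙
    rw [← Equiv.apply_eq_iff_eq (adj.homEquiv (T.obj A) A).symm,
      adj.homEquiv_naturality_left_symm, Equiv.symm_apply_apply]
    have hc : (adj.homEquiv (T.obj A) A).symm (𝟙 (T.obj A)) = adj.counit.app A := by
      simp [Adjunction.homEquiv_symm_apply]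
    rw [hc]
    apply lift_unique φ s hs1 (T.obj A).property
    rw [Category.assoc, liftHom_comp φ s hs1 hs2 hXB (adj.counit.app B)]
    simpa using (adj.counit.naturality φ).symm
  · -- i ≫ T.map φ = 𝟙
    rw [← Equiv.apply_eq_iff_eq (adj.homEquiv (T.obj B) B).symm,
      adj.homEquiv_naturality_right_symm, Equiv.symm_apply_apply,
      liftHom_comp φ s hs1 hs2 hXB (adj.counit.app B)]
    simp [Adjunction.homEquiv_symm_apply]
end
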